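/- Let B be an integral base-polyhedron with unique decreasingly minimal element m_ℝ (the minimum norm point of B). Then every decreasingly minimal element m_ℤ of the M-convex set B ∩ ℤ^S satisfies ⌊m_ℝ⌋ ≤ m_ℤ ≤ ⌈m_ℝ⌉ componentwise. -/

import Mathlib

open Finset

variable {α : Type*} [Fintype α] [DecidableEq α]

def Supermodular (p : Finset α → EReal) : Prop :=
  ∀ X Y : Finset α, p X + p Y ≤ p (X ∩ Y) + p (X ∪ Y)

/-- `p` takes values in `ℤ ∪ {−∞}`. -/
def IntegerValued (p : Finset α → EReal) : Prop :=
  ∀ X : Finset α, p X = ⊥ ∨ ∃ n : ℤ, p X = ((n : ℝ) : EReal)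

/-- `x` belongs to the base-polyhedron `B'(p)`:
`x(S) = p(S)` and `x(Z) ≥ p(Z)` for every `Z ⊆ S`. -/
def memB (p : Finset α → EReal) (x : α → ℝ) : Prop :=
  ((∑ s, x s : ℝ) : EReal) = p Finset.univ ∧
    ∀ Z : Finset α, p Z ≤ ((∑ s ∈ Z, x s : ℝ) : EReal)

/-- `x` is an integral element of the base-polyhedron `B'(p)` (a member of the
M-convex set `B ∩ ℤ^S`). -/
def memBZ (p : Finset α → EReal) (x : α → ℤ) : Prop :=
  ((((∑ s, x s : ℤ) : ℝ)) : EReal) = p Finset.univ ∧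
    ∀ Z : Finset α, p Z ≤ ((((∑ s ∈ Z, x s : ℤ) : ℝ)) : EReal)

/-- Lexicographic comparison `l1 ≤_lex l2` of lists. -/
def lexLE {β : Type*} [LT β] (l1 l2 : List β) : Prop :=
  l1 = l2 ∨ List.Lex (· < ·) l1 l2

/-- The components of `x` sorted in decreasing order. -/
noncomputable def sortDescR (x : α → ℝ) : List ℝ :=
  (Multiset.sort (Finset.univ.val.map x) (· ≤ ·)).reverse

/-- The components of the integral vector `x` sorted in decreasing order. -/
def sortDescZ (x : α → ℤ) : List ℤ :=
  (Multiset.sort (Finset.univ.val.map x) (· ≤ ·)).reverse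

/-- `m` is a decreasingly minimal element of the base-polyhedron `B'(p)`. -/
def DecMinR (p : Finset α → EReal) (m : α → ℝ) : Prop :=
  memB p m ∧ ∀ y : α → ℝ, memB p y → lexLE (sortDescR m) (sortDescR y)

/-- `m` is a decreasingly minimal element of the M-convex set `B'(p) ∩ ℤ^S`. -/
def DecMinZ (p : Finset α → EReal) (m : α → ℤ) : Prop :=
  memBZ p m ∧ ∀ y : α → ℤ, memBZ p y → lexLE (sortDescZ m) (sortDescZ y)

set_option linter.unusedSectionVars false

-- ############ tight set machinery ############

def TightR (p : Finset α → EReal) (x : α → ℝ) (Z : Finset α) : Prop :=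
  p Z = ((∑ u ∈ Z, x u : ℝ) : EReal)

lemma tight_empty (p : Finset α → EReal) (hp0 : p ∅ = 0) (x : α → ℝ) : TightR p x ∅ := by
  simp [TightR, hp0]

lemma tight_univ {p : Finset α → EReal} {x : α → ℝ} (hx : memB p x) :
    TightR p x Finset.univ := hx.1.symm

lemma tight_inter_union {p : Finset α → EReal} (hsup : Supermodular p) {x : α → ℝ}
    (hx : memB p x) {X Y : Finset α} (hX : TightR p x X) (hY : TightR p x Y) :
    TightR p x (X ∩ Y) ∧ TightR p x (X ∪ Y) := by
  have h1 : p (X ∩ Y) ≤ ((∑ u ∈ X ∩ Y, x u : ℝ) : EReal) := hx.2 _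
  have h2 : p (X ∪ Y) ≤ ((∑ u ∈ X ∪ Y, x u : ℝ) : EReal) := hx.2 _
  have hsum : (∑ u ∈ X ∪ Y, x u) + (∑ u ∈ X ∩ Y, x u) = (∑ u ∈ X, x u) + ∑ u ∈ Y, x u :=
    Finset.sum_union_inter
  have hkey : p X + p Y ≤ p (X ∩ Y) + p (X ∪ Y) := hsup X Y
  rw [hX, hY] at hkey
  constructor
  · by_contra hne
    have hlt : p (X ∩ Y) < ((∑ u ∈ X ∩ Y, x u : ℝ) : EReal) := lt_of_le_of_ne h1 hne
    have hbig : p (X ∩ Y) + p (X ∪ Y) <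
        ((∑ u ∈ X ∩ Y, x u : ℝ) : EReal) + ((∑ u ∈ X ∪ Y, x u : ℝ) : EReal) := by
      apply EReal.add_lt_add_of_lt_of_le' hlt h2 (EReal.coe_ne_bot _)
      · intro h; exact absurd h (EReal.coe_ne_top _)
    have : ((∑ u ∈ X, x u : ℝ) : EReal) + ((∑ u ∈ Y, x u : ℝ) : EReal) <
        ((∑ u ∈ X, x u : ℝ) : EReal) + ((∑ u ∈ Y, x u : ℝ) : EReal) := by
      calc ((∑ u ∈ X, x u : ℝ) : EReal) + ((∑ u ∈ Y, x u : ℝ) : EReal)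
          ≤ p (X ∩ Y) + p (X ∪ Y) := hkey
        _ < ((∑ u ∈ X ∩ Y, x u : ℝ) : EReal) + ((∑ u ∈ X ∪ Y, x u : ℝ) : EReal) := hbig
        _ = ((∑ u ∈ X, x u : ℝ) : EReal) + ((∑ u ∈ Y, x u : ℝ) : EReal) := by
            rw [← EReal.coe_add, ← EReal.coe_add, add_comm (∑ u ∈ X ∩ Y, x u), hsum]
    exact absurd this (lt_irrefl _)
  · by_contra hne
    have hlt : p (X ∪ Y) < ((∑ u ∈ X ∪ Y, x u : ℝ) : EReal) := lt_of_le_of_ne h2 hne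
    have hbig : p (X ∩ Y) + p (X ∪ Y) <
        ((∑ u ∈ X ∩ Y, x u : ℝ) : EReal) + ((∑ u ∈ X ∪ Y, x u : ℝ) : EReal) := by
      rw [add_comm (p (X ∩ Y)), add_comm ((∑ u ∈ X ∩ Y, x u : ℝ) : EReal)]
      apply EReal.add_lt_add_of_lt_of_le' hlt h1 (EReal.coe_ne_bot _)
      · intro h; exact absurd h (EReal.coe_ne_top _)
    have : ((∑ u ∈ X, x u : ℝ) : EReal) + ((∑ u ∈ Y, x u : ℝ) : EReal) <
        ((∑ u ∈ X, x u : ℝ) : EReal) + ((∑ u ∈ Y, x u : ℝ) : EReal) := by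
      calc ((∑ u ∈ X, x u : ℝ) : EReal) + ((∑ u ∈ Y, x u : ℝ) : EReal)
          ≤ p (X ∩ Y) + p (X ∪ Y) := hkey
        _ < ((∑ u ∈ X ∩ Y, x u : ℝ) : EReal) + ((∑ u ∈ X ∪ Y, x u : ℝ) : EReal) := hbig
        _ = ((∑ u ∈ X, x u : ℝ) : EReal) + ((∑ u ∈ Y, x u : ℝ) : EReal) := by
            rw [← EReal.coe_add, ← EReal.coe_add, add_comm (∑ u ∈ X ∩ Y, x u), hsum]
    exact absurd this (lt_irrefl _)

open Classical in
noncomputable def Tset (p : Finset α → EReal) (x : α → ℝ) (s : α) : Finset α :=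
  (Finset.univ.filter (fun Z : Finset α => TightR p x Z ∧ s ∈ Z)).inf id

lemma Tset_tight {p : Finset α → EReal} (hsup : Supermodular p) {x : α → ℝ}
    (hx : memB p x) (s : α) : TightR p x (Tset p x s) := by
  classical
  apply Finset.inf_induction
  · exact tight_univ hx
  · intro a ha b hb
    have := (tight_inter_union hsup hx ha hb).1
    simpa [Finset.inf_eq_inter] using this
  · intro Z hZ
    exact (Finset.mem_filter.mp hZ).2.1

lemma mem_Tset_self {p : Finset α → EReal} {x : α → ℝ} (s : α) : s ∈ Tset p x s := by
  classical
  have : ({s} : Finset α) ≤ Tset p x s := by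
    apply Finset.le_inf
    intro Z hZ
    simpa using (Finset.mem_filter.mp hZ).2.2
  simpa using this

lemma Tset_subset {p : Finset α → EReal} {x : α → ℝ} {s : α} {Z : Finset α}
    (hZ : TightR p x Z) (hs : s ∈ Z) : Tset p x s ⊆ Z := by
  classical
  have hmem : Z ∈ Finset.univ.filter (fun Z : Finset α => TightR p x Z ∧ s ∈ Z) :=
    Finset.mem_filter.mpr ⟨Finset.mem_univ _, hZ, hs⟩
  have := Finset.inf_le (f := id) hmem
  unfold Tset; convert this; rfl

lemma cut_lemma {p : Finset α → EReal} (hsup : Supermodular p) {u w : α → ℝ}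
    (hu : memB p u) (hw : memB p w) {X Y : Finset α}
    (hX : TightR p u X) (hY : TightR p w Y) :
    (∑ i ∈ X \ Y, u i) ≤ ∑ i ∈ X \ Y, w i := by
  have h1 : p (X ∩ Y) ≤ ((∑ i ∈ X ∩ Y, u i : ℝ) : EReal) := hu.2 _
  have h2 : p (X ∪ Y) ≤ ((∑ i ∈ X ∪ Y, w i : ℝ) : EReal) := hw.2 _
  have hkey : p X + p Y ≤ p (X ∩ Y) + p (X ∪ Y) := hsup X Y
  rw [hX, hY] at hkey
  have hE : (((∑ i ∈ X, u i) + (∑ i ∈ Y, w i) : ℝ) : EReal) ≤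
      (((∑ i ∈ X ∩ Y, u i) + (∑ i ∈ X ∪ Y, w i) : ℝ) : EReal) := by
    rw [EReal.coe_add, EReal.coe_add]
    exact le_trans hkey (add_le_add h1 h2)
  have hreal : (∑ i ∈ X, u i) + (∑ i ∈ Y, w i) ≤
      (∑ i ∈ X ∩ Y, u i) + (∑ i ∈ X ∪ Y, w i) := EReal.coe_le_coe_iff.mp hE
  have e1 : (∑ i ∈ X \ Y, u i) + (∑ i ∈ X ∩ Y, u i) = ∑ i ∈ X, u i := by
    rw [← Finset.sum_union (Finset.disjoint_sdiff_inter X Y), Finset.sdiff_union_inter]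
  have e2 : (∑ i ∈ X \ Y, w i) + (∑ i ∈ Y, w i) = ∑ i ∈ X ∪ Y, w i := by
    rw [← Finset.sum_union Finset.sdiff_disjoint, Finset.sdiff_union_self_eq_union]
  linarith

-- ############ exchange lemmas ############

lemma castZ_memB {p : Finset α → EReal} {x : α → ℤ} (hx : memBZ p x) :
    memB p (fun u => ((x u : ℝ))) := by
  constructor
  · rw [← hx.1]; norm_num [Int.cast_sum]
  · intro Z
    have := hx.2 Z
    rw [show ((((∑ s ∈ Z, x s : ℤ) : ℝ)) : EReal) = ((∑ s ∈ Z, ((x s : ℝ)) : ℝ) : EReal) by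
      norm_num [Int.cast_sum]] at this
    exact this

lemma exchangeZ {p : Finset α → EReal} (hint : IntegerValued p) {x : α → ℤ}
    (hx : memBZ p x) {s t : α} (hst : s ≠ t)
    (hT : ∀ Z : Finset α, TightR p (fun u => ((x u : ℝ))) Z → s ∈ Z → t ∈ Z) :
    memBZ p (fun u => x u - (if u = s then 1 else 0) + (if u = t then 1 else 0)) := by
  classical
  have hsum : ∀ Z : Finset α,
      (∑ u ∈ Z, (x u - (if u = s then 1 else 0) + (if u = t then 1 else 0))) =
      (∑ u ∈ Z, x u) - (if s ∈ Z then 1 else 0) + (if t ∈ Z then 1 else 0) := by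
    intro Z
    rw [Finset.sum_add_distrib, Finset.sum_sub_distrib]
    congr 1
    · congr 1
      · simpa using Finset.sum_ite_eq' Z s (fun _ => (1 : ℤ))
    · simpa using Finset.sum_ite_eq' Z t (fun _ => (1 : ℤ))
  constructor
  · rw [hsum Finset.univ]
    simpa using hx.1
  · intro Z
    rw [hsum Z]
    by_cases hsZ : s ∈ Z
    · by_cases htZ : t ∈ Z
      · simpa [hsZ, htZ] using hx.2 Z
      · -- the interesting case: Z is not tight
        simp only [hsZ, htZ, if_true, if_false, add_zero]
        have hnt : ¬ TightR p (fun u => ((x u : ℝ))) Z := fun h => htZ (hT Z h hsZ)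
        have hle := hx.2 Z
        rcases hint Z with hbot | ⟨n, hn⟩
        · rw [hbot]; exact bot_le
        · rw [hn] at hle ⊢
          have h1 : (n : ℝ) ≤ ((∑ u ∈ Z, x u : ℤ) : ℝ) := by
            exact_mod_cast EReal.coe_le_coe_iff.mp hle
          have h2 : n ≤ (∑ u ∈ Z, x u) := by exact_mod_cast h1
          have hne : n ≠ (∑ u ∈ Z, x u) := by
            intro h
            apply hnt
            rw [TightR, hn, h]
            norm_num [Int.cast_sum]
          have : n ≤ (∑ u ∈ Z, x u) - 1 := by omega
          rw [EReal.coe_le_coe_iff]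
          exact_mod_cast this
    · by_cases htZ : t ∈ Z
      · simp only [hsZ, htZ, if_true, if_false, sub_zero]
        refine le_trans (hx.2 Z) ?_
        rw [EReal.coe_le_coe_iff]
        push_cast
        linarith
      · simpa [hsZ, htZ] using hx.2 Z

lemma exchangeR {p : Finset α → EReal} (hint : IntegerValued p) {x : α → ℝ}
    (hx : memB p x) {s t : α} (hst : s ≠ t)
    (hT : ∀ Z : Finset α, TightR p x Z → s ∈ Z → t ∈ Z) (ε : ℝ) (hε : 0 < ε) :
    ∃ δ : ℝ, 0 < δ ∧ δ ≤ ε ∧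
      memB p (fun u => x u - (if u = s then δ else 0) + (if u = t then δ else 0)) := by
  classical
  set F : Finset (Finset α) :=
    Finset.univ.filter (fun Z : Finset α => s ∈ Z ∧ t ∉ Z ∧ ¬ TightR p x Z ∧ p Z ≠ ⊥) with hF
  set G : Finset ℝ := insert ε (F.image (fun Z => (∑ u ∈ Z, x u) - (p Z).toReal)) with hG
  have hGne : G.Nonempty := ⟨ε, Finset.mem_insert_self _ _⟩
  set δ : ℝ := G.min' hGne with hδ
  have hδε : δ ≤ ε := Finset.min'_le _ _ (Finset.mem_insert_self _ _)
  have hslack : ∀ Z ∈ F, 0 < (∑ u ∈ Z, x u) - (p Z).toReal := by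
    intro Z hZ
    rw [hF] at hZ
    obtain ⟨-, hs, ht, hnt, hnb⟩ := Finset.mem_filter.mp hZ
    have hle := hx.2 Z
    rcases hint Z with hbot | ⟨n, hn⟩
    · exact absurd hbot hnb
    · rw [hn] at hle ⊢
      have h1 : (n : ℝ) ≤ ∑ u ∈ Z, x u := EReal.coe_le_coe_iff.mp hle
      have h2 : (n : ℝ) ≠ ∑ u ∈ Z, x u := by
        intro h; exact hnt (by rw [TightR, hn, h])
      have htr : ((n : ℝ) : EReal).toReal = (n : ℝ) := EReal.toReal_coe _
      rw [htr]
      have := lt_of_le_of_ne h1 h2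
      linarith
  have hδpos : 0 < δ := by
    have hpos : ∀ g ∈ G, 0 < g := by
      intro g hg
      rw [hG] at hg
      rcases Finset.mem_insert.mp hg with h | h
      · exact h ▸ hε
      · obtain ⟨Z, hZ, hZe⟩ := Finset.mem_image.mp h
        exact hZe ▸ hslack Z hZ
    exact hpos _ (Finset.min'_mem G hGne)
  have hδsl : ∀ Z ∈ F, δ ≤ (∑ u ∈ Z, x u) - (p Z).toReal := by
    intro Z hZ
    apply Finset.min'_le
    rw [hG]
    exact Finset.mem_insert_of_mem (Finset.mem_image.mpr ⟨Z, hZ, rfl⟩)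
  refine ⟨δ, hδpos, hδε, ?_, ?_⟩
  · rw [show (∑ u, (x u - (if u = s then δ else 0) + (if u = t then δ else 0))) =
        (∑ u, x u) - (if s ∈ Finset.univ then δ else 0) + (if t ∈ Finset.univ then δ else 0) by
      rw [Finset.sum_add_distrib, Finset.sum_sub_distrib]
      congr 1
      · congr 1
        · simpa using Finset.sum_ite_eq' Finset.univ s (fun _ => δ)
      · simpa using Finset.sum_ite_eq' Finset.univ t (fun _ => δ)]
    simpa using hx.1
  · intro Z
    rw [show (∑ u ∈ Z, (x u - (if u = s then δ else 0) + (if u = t then δ else 0))) =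
        (∑ u ∈ Z, x u) - (if s ∈ Z then δ else 0) + (if t ∈ Z then δ else 0) by
      rw [Finset.sum_add_distrib, Finset.sum_sub_distrib]
      congr 1
      · congr 1
        · simpa using Finset.sum_ite_eq' Z s (fun _ => δ)
      · simpa using Finset.sum_ite_eq' Z t (fun _ => δ)]
    by_cases hsZ : s ∈ Z
    · by_cases htZ : t ∈ Z
      · simpa [hsZ, htZ] using hx.2 Z
      · simp only [hsZ, htZ, if_true, if_false, add_zero]
        have hnt : ¬ TightR p x Z := fun h => htZ (hT Z h hsZ)
        rcases hint Z with hbot | ⟨n, hn⟩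
        · rw [hbot]; exact bot_le
        · have hZF : Z ∈ F := by
            rw [hF]
            exact Finset.mem_filter.mpr ⟨Finset.mem_univ _, hsZ, htZ, hnt, by rw [hn]; exact EReal.coe_ne_bot _⟩
          have := hδsl Z hZF
          rw [hn] at *
          rw [EReal.coe_le_coe_iff]
          have htr : ((n : ℝ) : EReal).toReal = (n : ℝ) := EReal.toReal_coe _
          rw [htr] at this
          linarith
    · by_cases htZ : t ∈ Z
      · simp only [hsZ, htZ, if_true, if_false, sub_zero]
        refine le_trans (hx.2 Z) ?_
        rw [EReal.coe_le_coe_iff]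
        linarith
      · simpa [hsZ, htZ] using hx.2 Z

-- ############ sorting bridge ############

lemma myLex_asymm {β : Type*} [LinearOrder β] :
    ∀ {l1 l2 : List β}, List.Lex (· < ·) l1 l2 → List.Lex (· < ·) l2 l1 → False := by
  intro l1 l2 h1 h2
  induction h1 with
  | nil => cases h2
  | @rel a l1' b l2' hab =>
    cases h2 with
    | rel hba => exact absurd hba (not_lt.2 hab.le)
    | cons _ => exact absurd hab (lt_irrefl _)
  | @cons a l1' l2' h ih =>
    cases h2 with
    | rel hba => exact absurd hba (lt_irrefl _)
    | cons h' => exact ih h'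

lemma lex_of_count {β : Type*} [LinearOrder β] [DecidableEq β] :
    ∀ (L1 : List β), ∀ L2 : List β, L1.Pairwise (· ≥ ·) → L2.Pairwise (· ≥ ·) →
    L1.length = L2.length → ∀ v : β, L2.count v < L1.count v →
    (∀ w, v < w → L1.count w = L2.count w) → List.Lex (· < ·) L2 L1 := by
  intro L1
  induction L1 with
  | nil => intro L2 _ _ _ v hv _; simp at hv
  | cons a t1 ih =>
    intro L2 h1 h2 hlen v hv habove
    cases L2 with
    | nil => simp at hlen
    | cons b t2 =>
      have hmem : v ∈ a :: t1 := by
        have : 0 < (a :: t1).count v := lt_of_le_of_lt (Nat.zero_le _) hv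
        exact List.count_pos_iff.mp this
      have hva : v ≤ a := by
        rcases List.mem_cons.mp hmem with h | h
        · exact le_of_eq h
        · exact (List.pairwise_cons.mp h1).1 v h
      have hba : b ≤ a := by
        by_contra hcon
        push_neg at hcon
        have hvb : v < b := lt_of_le_of_lt hva hcon
        have hc : (a :: t1).count b = (b :: t2).count b := habove b hvb
        have hbpos : 0 < (b :: t2).count b := by
          simp [List.count_cons]
        have : b ∈ a :: t1 := List.count_pos_iff.mp (hc ▸ hbpos)
        rcases List.mem_cons.mp this with h | h
        · exact absurd h.symm (ne_of_lt hcon)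
        · exact absurd ((List.pairwise_cons.mp h1).1 b h) (not_le.mpr hcon)
      rcases lt_or_eq_of_le hba with hlt | heq
      · exact List.Lex.rel hlt
      · subst heq
        apply List.Lex.cons
        have h1' := (List.pairwise_cons.mp h1).2
        have h2' := (List.pairwise_cons.mp h2).2
        have hlen' : t1.length = t2.length := by simpa using hlen
        rcases lt_or_eq_of_le hva with hvlt | hveq
        · apply ih t2 h1' h2' hlen' v
          · have hne : ¬ (b = v) := fun h => absurd (h ▸ hvlt) (lt_irrefl _)
            have e1 : (b :: t1).count v = t1.count v := by
              simp [List.count_cons, hne]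
            have e2 : (b :: t2).count v = t2.count v := by
              simp [List.count_cons, hne]
            rw [e1, e2] at hv; exact hv
          · intro w hw
            have h3 := habove w hw
            simp only [List.count_cons] at h3
            omega
        · subst hveq
          apply ih t2 h1' h2' hlen' v
          · have e1 : (v :: t1).count v = t1.count v + 1 := by
              simp [List.count_cons]
            have e2 : (v :: t2).count v = t2.count v + 1 := by
              simp [List.count_cons]
            rw [e1, e2] at hv; omega
          · intro w hw
            have h3 := habove w hw
            simp only [List.count_cons] at h3
            omega

lemma sortDesc_sorted {β : Type*} [LinearOrder β] (M : Multiset β) :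
    ((Multiset.sort M (· ≤ ·)).reverse).Pairwise (· ≥ ·) := by
  have h := Multiset.pairwise_sort (s := M) (r := (· ≤ ·))
  rw [List.pairwise_reverse]
  exact h

lemma sortDesc_count {β : Type*} [LinearOrder β] [DecidableEq β] (M : Multiset β) (v : β) :
    ((Multiset.sort M (· ≤ ·)).reverse).count v = M.count v := by
  rw [List.count_reverse]
  have h : (↑(Multiset.sort M (· ≤ ·)) : Multiset β) = M := Multiset.sort_eq (s := M) (r := (· ≤ ·))
  conv_rhs => rw [← h]
  rw [Multiset.coe_count]

lemma sortDesc_length {β : Type*} [LinearOrder β] (M : Multiset β) :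
    ((Multiset.sort M (· ≤ ·)).reverse).length = Multiset.card M := by
  rw [List.length_reverse, Multiset.length_sort]

/-- The key exchange-lex lemma: if `y` is obtained from `x` by strictly decreasing
its value at `s` and changing it at `t`, with all new/old involved values below `x s`,
then `y` is strictly dec-lex smaller. -/
lemma lex_exchange {β : Type*} [LinearOrder β] [DecidableEq β]
    (x y : α → β) (s t : α) (hst : s ≠ t)
    (hys : y s < x s) (hyt : y t < x s) (hxt : x t < x s)
    (hother : ∀ u, u ≠ s → u ≠ t → y u = x u) :
    List.Lex (· < ·)
      ((Multiset.sort (Finset.univ.val.map y) (· ≤ ·)).reverse)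
      ((Multiset.sort (Finset.univ.val.map x) (· ≤ ·)).reverse) := by
  classical
  have hsmem : s ∈ (Finset.univ : Finset α).val := Finset.mem_univ_val _
  have htmem : t ∈ (Finset.univ : Finset α).val.erase s :=
    (Multiset.mem_erase_of_ne hst.symm).mpr (Finset.mem_univ_val _)
  set R : Multiset α := ((Finset.univ : Finset α).val.erase s).erase t with hR
  have hdecomp : (Finset.univ : Finset α).val = s ::ₘ t ::ₘ R := by
    rw [hR, Multiset.cons_erase htmem, Multiset.cons_erase hsmem]
  have hnd : (Finset.univ : Finset α).val.Nodup := (Finset.univ : Finset α).nodup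
  have hnd1 : ((Finset.univ : Finset α).val.erase s).Nodup := hnd.erase s
  have hRmem : ∀ u ∈ R, u ≠ s ∧ u ≠ t := by
    intro u hu
    rw [hR, hnd1.mem_erase_iff] at hu
    obtain ⟨hut, hu2⟩ := hu
    rw [hnd.mem_erase_iff] at hu2
    exact ⟨hu2.1, hut⟩
  have hmapR : R.map y = R.map x :=
    Multiset.map_congr rfl (fun u hu => hother u (hRmem u hu).1 (hRmem u hu).2)
  have hcy : ∀ w : β, Multiset.count w ((Finset.univ : Finset α).val.map y) =
      Multiset.count w (R.map x) + (if w = y s then 1 else 0) + (if w = y t then 1 else 0) := by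
    intro w
    rw [hdecomp, Multiset.map_cons, Multiset.map_cons, Multiset.count_cons, Multiset.count_cons,
      hmapR]
    ring
  have hcx : ∀ w : β, Multiset.count w ((Finset.univ : Finset α).val.map x) =
      Multiset.count w (R.map x) + (if w = x s then 1 else 0) + (if w = x t then 1 else 0) := by
    intro w
    rw [hdecomp, Multiset.map_cons, Multiset.map_cons, Multiset.count_cons, Multiset.count_cons]
    ring
  apply lex_of_count _ _ (sortDesc_sorted _) (sortDesc_sorted _)
    (by rw [sortDesc_length, sortDesc_length]; simp) (x s)
  · rw [sortDesc_count, sortDesc_count, hcy, hcx]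
    have h1 : ¬ (x s = y s) := (ne_of_lt hys).symm
    have h2 : ¬ (x s = y t) := (ne_of_lt hyt).symm
    have h3 : ¬ (x s = x t) := (ne_of_lt hxt).symm
    simp [h1, h2, h3]
  · intro w hw
    rw [sortDesc_count, sortDesc_count, hcy, hcx]
    have h1 : ¬ (w = y s) := by intro h; rw [h] at hw; exact absurd hw (not_lt.mpr hys.le)
    have h2 : ¬ (w = y t) := by intro h; rw [h] at hw; exact absurd hw (not_lt.mpr hyt.le)
    have h3 : ¬ (w = x t) := by intro h; rw [h] at hw; exact absurd hw (not_lt.mpr hxt.le)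
    have h4 : ¬ (w = x s) := by intro h; rw [h] at hw; exact absurd hw (lt_irrefl _)
    simp [h1, h2, h3, h4]

-- ############ local optimality ############

lemma LOZ {p : Finset α → EReal} (hint : IntegerValued p) {mZ : α → ℤ}
    (hmZ : DecMinZ p mZ) {s t : α} (hst : s ≠ t)
    (ht : t ∈ Tset p (fun u => ((mZ u : ℝ))) s) : mZ s - 1 ≤ mZ t := by
  by_contra hcon
  push_neg at hcon
  have hT : ∀ Z : Finset α, TightR p (fun u => ((mZ u : ℝ))) Z → s ∈ Z → t ∈ Z :=
    fun Z hZ hs => Tset_subset hZ hs ht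
  set y : α → ℤ := fun u => mZ u - (if u = s then 1 else 0) + (if u = t then 1 else 0) with hy
  have hymem : memBZ p y := exchangeZ hint hmZ.1 hst hT
  have hys : y s = mZ s - 1 := by simp [hy, hst]
  have hyt : y t = mZ t + 1 := by simp [hy, hst.symm]
  have hstrict : List.Lex (· < ·) (sortDescZ y) (sortDescZ mZ) := by
    apply lex_exchange mZ y s t hst
    · rw [hys]; omega
    · rw [hyt]; omega
    · omega
    · intro u hus hut; simp [hy, hus, hut]
  rcases hmZ.2 y hymem with heq | hlex
  · rw [heq] at hstrict; exact myLex_asymm hstrict hstrict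
  · exact myLex_asymm hstrict hlex

lemma LOR {p : Finset α → EReal} (hint : IntegerValued p) {mR : α → ℝ}
    (hmR : DecMinR p mR) {s t : α} (hst : s ≠ t)
    (ht : t ∈ Tset p mR s) : mR s ≤ mR t := by
  by_contra hcon
  push_neg at hcon
  have hT : ∀ Z : Finset α, TightR p mR Z → s ∈ Z → t ∈ Z :=
    fun Z hZ hs => Tset_subset hZ hs ht
  obtain ⟨δ, hδpos, hδε, hymem⟩ := exchangeR hint hmR.1 hst hT ((mR s - mR t)/2) (by linarith)
  set y : α → ℝ := fun u => mR u - (if u = s then δ else 0) + (if u = t then δ else 0) with hy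
  have hys : y s = mR s - δ := by simp [hy, hst]
  have hyt : y t = mR t + δ := by simp [hy, hst.symm]
  have hstrict : List.Lex (· < ·) (sortDescR y) (sortDescR mR) := by
    apply lex_exchange mR y s t hst
    · rw [hys]; linarith
    · rw [hyt]; linarith
    · linarith
    · intro u hus hut; simp [hy, hus, hut]
  rcases hmR.2 y hymem with heq | hlex
  · rw [heq] at hstrict; exact myLex_asymm hstrict hstrict
  · exact myLex_asymm hstrict hlex

-- ############ level sets are tight ############

lemma level_tight {p : Finset α → EReal} (hp0 : p ∅ = 0) (hsup : Supermodular p)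
    (hint : IntegerValued p) {mR : α → ℝ} (hmR : DecMinR p mR) (μ : ℝ) :
    TightR p mR (Finset.univ.filter (fun u => μ ≤ mR u)) := by
  classical
  set L : Finset α := Finset.univ.filter (fun u => μ ≤ mR u) with hL
  have hkey : ∀ s ∈ L, Tset p mR s ⊆ L := by
    intro s hs t htT
    have hμs : μ ≤ mR s := (Finset.mem_filter.mp hs).2
    rw [hL, Finset.mem_filter]
    refine ⟨Finset.mem_univ _, ?_⟩
    by_cases hts : t = s
    · exact hts ▸ hμs
    · exact le_trans hμs (LOR hint hmR (Ne.symm hts) htT)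
  have hLsup : L = L.sup (fun s => Tset p mR s) := by
    apply le_antisymm
    · intro s hs
      exact Finset.mem_sup.mpr ⟨s, hs, mem_Tset_self s⟩
    · apply Finset.sup_le
      intro s hs
      exact hkey s hs
  rw [hLsup]
  apply Finset.sup_induction
  · simpa [Finset.bot_eq_empty] using tight_empty p hp0 mR
  · intro a ha b hb
    have := (tight_inter_union hsup hmR.1 ha hb).2
    simpa [Finset.sup_eq_union] using this
  · intro s _
    exact Tset_tight hsup hmR.1 s

/-- Proximity: every dec-min element `m_ℤ` of the M-convex set `B ∩ ℤ^S` satisfies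
`⌊m_ℝ⌋ ≤ m_ℤ ≤ ⌈m_ℝ⌉`, where `m_ℝ` is the (unique) dec-min element of the
integral base-polyhedron `B`. -/
theorem decmin_proximity_floor_ceil (p : Finset α → EReal) (hp0 : p ∅ = 0)
    (hfin : p (Finset.univ : Finset α) ≠ ⊥) (hsup : Supermodular p)
    (hint : IntegerValued p) (mR : α → ℝ) (hmR : DecMinR p mR)
    (mZ : α → ℤ) (hmZ : DecMinZ p mZ) :
    ∀ s : α, ⌊mR s⌋ ≤ mZ s ∧ mZ s ≤ ⌈mR s⌉ := by
  classical
  intro s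
  set mZR : α → ℝ := fun u => ((mZ u : ℝ)) with hmZRdef
  have hmZR : memB p mZR := castZ_memB hmZ.1
  constructor
  · -- lower bound: ⌊mR s⌋ ≤ mZ s
    by_contra hcon
    push_neg at hcon
    have hlow : mZ s ≤ ⌊mR s⌋ - 1 := by omega
    set lam : ℝ := mR s with hlam
    set k : ℤ := ⌊lam⌋ + 1 with hk
    set A : Finset α := (Finset.univ.filter (fun t => k ≤ mZ t)).sup (fun t => Tset p mZR t)
      with hA
    have hAt : TightR p mZR A := by
      rw [hA]
      apply Finset.sup_induction
      · simpa [Finset.bot_eq_empty] using tight_empty p hp0 mZR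
      · intro a ha b hb
        have := (tight_inter_union hsup hmZR ha hb).2
        simpa [Finset.sup_eq_union] using this
      · intro t _
        exact Tset_tight hsup hmZR t
    have hAsub : ∀ t : α, k ≤ mZ t → t ∈ A := by
      intro t ht
      rw [hA]
      have htA : t ∈ Finset.univ.filter (fun t : α => k ≤ mZ t) :=
        Finset.mem_filter.mpr ⟨Finset.mem_univ t, ht⟩
      exact (Finset.le_sup (f := fun t => Tset p mZR t) htA) (mem_Tset_self t)
    have hAprop : ∀ u ∈ A, k - 1 ≤ mZ u := by
      intro u hu
      rw [hA] at hu
      obtain ⟨t, ht, hut⟩ := Finset.mem_sup.mp hu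
      have hkt : k ≤ mZ t := (Finset.mem_filter.mp ht).2
      by_cases hteq : u = t
      · rw [hteq]; omega
      · have := LOZ hint hmZ (fun h => hteq (h.symm)) hut
        omega
    set X : Finset α := Finset.univ.filter (fun u => lam ≤ mR u) with hX
    have hXt : TightR p mR X := level_tight hp0 hsup hint hmR lam
    have hsX : s ∈ X := Finset.mem_filter.mpr ⟨Finset.mem_univ _, le_refl _⟩
    have hsA : s ∉ A := by
      intro h
      have := hAprop s h
      omega
    have hcut : (∑ i ∈ X \ A, mR i) ≤ ∑ i ∈ X \ A, mZR i :=
      cut_lemma hsup hmR.1 hmZR hXt hAt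
    have hstrict : (∑ i ∈ X \ A, mZR i) < ∑ i ∈ X \ A, mR i := by
      apply Finset.sum_lt_sum
      · intro i hi
        obtain ⟨hiX, hiA⟩ := Finset.mem_sdiff.mp hi
        have h1 : lam ≤ mR i := (Finset.mem_filter.mp hiX).2
        have h2 : mZ i ≤ k - 1 := by
          by_contra h
          exact hiA (hAsub i (by omega))
        have h3 : (mZ i : ℝ) ≤ (⌊lam⌋ : ℝ) := by
          have : mZ i ≤ ⌊lam⌋ := by omega
          exact_mod_cast this
        calc mZR i ≤ (⌊lam⌋ : ℝ) := h3
          _ ≤ lam := Int.floor_le lam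
          _ ≤ mR i := h1
      · refine ⟨s, Finset.mem_sdiff.mpr ⟨hsX, hsA⟩, ?_⟩
        have h3 : (mZ s : ℝ) ≤ (⌊lam⌋ : ℝ) - 1 := by
          have : mZ s ≤ ⌊lam⌋ - 1 := hlow
          push_cast
          exact_mod_cast (by exact_mod_cast this : (mZ s : ℝ) ≤ ((⌊lam⌋ - 1 : ℤ) : ℝ))
        calc mZR s ≤ (⌊lam⌋ : ℝ) - 1 := h3
          _ ≤ lam - 1 := by linarith [Int.floor_le lam]
          _ < lam := by linarith
    linarith
  · -- upper bound: mZ s ≤ ⌈mR s⌉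
    by_contra hcon
    push_neg at hcon
    have hupp : ⌈mR s⌉ + 1 ≤ mZ s := by omega
    set lam : ℝ := mR s with hlam
    set X : Finset α := Tset p mZR s with hXdef
    have hXt : TightR p mZR X := Tset_tight hsup hmZR s
    have hsX : s ∈ X := mem_Tset_self s
    set Y : Finset α := Finset.univ.filter (fun u => lam < mR u) with hY
    have hYt : TightR p mR Y := by
      by_cases hYe : Y = ∅
      · rw [hYe]; exact tight_empty p hp0 mR
      · have hYne : Y.Nonempty := Finset.nonempty_iff_ne_empty.mpr hYe
        set μ : ℝ := (Y.image mR).min' (hYne.image mR) with hμ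
        have hYeq : Y = Finset.univ.filter (fun u => μ ≤ mR u) := by
          ext u
          simp only [hY, Finset.mem_filter, Finset.mem_univ, true_and]
          constructor
          · intro h
            apply Finset.min'_le
            exact Finset.mem_image.mpr ⟨u, Finset.mem_filter.mpr ⟨Finset.mem_univ _, h⟩, rfl⟩
          · intro h
            have hm := Finset.min'_mem (Y.image mR) (hYne.image mR)
            obtain ⟨u₀, hu₀, hu₀e⟩ := Finset.mem_image.mp hm
            have : lam < mR u₀ := (Finset.mem_filter.mp hu₀).2
            rw [hu₀e] at this
            exact lt_of_lt_of_le this h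
        rw [hYeq]
        exact level_tight hp0 hsup hint hmR μ
    have hsY : s ∉ Y := by
      intro h
      exact absurd (Finset.mem_filter.mp h).2 (lt_irrefl _)
    have hcut : (∑ i ∈ X \ Y, mZR i) ≤ ∑ i ∈ X \ Y, mR i :=
      cut_lemma hsup hmZR hmR.1 hXt hYt
    have hstrict : (∑ i ∈ X \ Y, mR i) < ∑ i ∈ X \ Y, mZR i := by
      apply Finset.sum_lt_sum
      · intro i hi
        obtain ⟨hiX, hiY⟩ := Finset.mem_sdiff.mp hi
        have h1 : mR i ≤ lam := by
          by_contra h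
          exact hiY (Finset.mem_filter.mpr ⟨Finset.mem_univ _, by push_neg at h; exact h⟩)
        have h2 : mZ s - 1 ≤ mZ i := by
          by_cases hieq : i = s
          · rw [hieq]; omega
          · exact LOZ hint hmZ (fun h => hieq h.symm) hiX
        have h3 : (⌈lam⌉ : ℝ) ≤ (mZ i : ℝ) := by
          have : ⌈lam⌉ ≤ mZ i := by omega
          exact_mod_cast this
        calc mR i ≤ lam := h1
          _ ≤ (⌈lam⌉ : ℝ) := Int.le_ceil lam
          _ ≤ mZR i := h3
      · refine ⟨s, Finset.mem_sdiff.mpr ⟨hsX, hsY⟩, ?_⟩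
        have h3 : (⌈lam⌉ : ℝ) + 1 ≤ (mZ s : ℝ) := by
          have : ⌈lam⌉ + 1 ≤ mZ s := hupp
          exact_mod_cast (by exact_mod_cast this : ((⌈lam⌉ + 1 : ℤ) : ℝ) ≤ (mZ s : ℝ))
        calc mR s = lam := rfl
          _ ≤ (⌈lam⌉ : ℝ) := Int.le_ceil lam
          _ < (⌈lam⌉ : ℝ) + 1 := by linarith
          _ ≤ mZR s := h3
    linarith
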